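/- If V is a k-vector space with a countably infinite basis, then the set of endomorphisms of V with finite-dimensional image forms a two-sided ideal of End_k(V), and this ideal is the unique maximal two-sided ideal of End_k(V). -/

import Mathlib

open LinearMap

/-- A two-sided ideal of `End k V` containing an endomorphism of infinite rank is everything. -/
lemma aux_eq_top (k V : Type*) [Field k] [AddCommGroup V] [Module k V]
    (b : Module.Basis ℕ k V) (J : TwoSidedIdeal (Module.End k V)) (f : Module.End k V)
    (hfJ : f ∈ J) (hf : ¬ FiniteDimensional k (LinearMap.range f)) : J = ⊤ := by
  -- f has rank ≥ ℵ₀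
  have hrank : (Cardinal.aleph0 : Cardinal) ≤ LinearMap.rank f := by
    rw [LinearMap.rank]
    by_contra h
    exact hf (Module.rank_lt_aleph0_iff.1 (lt_of_not_ge h))
  obtain ⟨s, hs, hsi⟩ := LinearMap.le_rank_iff_exists_linearIndependent.1 hrank
  rw [Cardinal.lift_inj] at hs
  obtain ⟨e⟩ : Nonempty (ℕ ≃ s) :=
    Cardinal.lift_mk_eq'.1 (by simp [hs])
  set u : ℕ → V := fun n => (e n : V) with hu
  have hw : LinearIndependent k (fun n => f (u n)) := by
    have : (fun n => f (u n)) = (fun x : s => f x) ∘ e := rfl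
    rw [this]
    exact hsi.comp e e.injective
  set w : ℕ → V := fun n => f (u n) with hwdef
  -- h sends b n to u n
  set h : Module.End k V := b.constr k u with hh
  -- g sends w n to b n
  set W : Submodule k V := Submodule.span k (Set.range w) with hW
  obtain ⟨W', hcompl⟩ := Submodule.exists_isCompl W
  set proj : V →ₗ[k] W := W.projectionOnto W' hcompl with hproj
  set bw : Module.Basis ℕ k W := Module.Basis.span hw with hbw
  set g : Module.End k V := (bw.constr k (fun n => b n)).comp proj with hg
  have key : g * f * h = 1 := by
    apply b.ext
    intro n
    have h1 : h (b n) = u n := b.constr_basis k u n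
    have h2 : proj (w n) = bw n := by
      have hmem : w n ∈ W := Submodule.subset_span ⟨n, rfl⟩
      have : proj ((⟨w n, hmem⟩ : W) : V) = ⟨w n, hmem⟩ :=
        Submodule.projectionOnto_apply_left hcompl ⟨w n, hmem⟩
      rw [show (w n) = ((⟨w n, hmem⟩ : W) : V) from rfl, this]
      exact (Module.Basis.span_apply hw n).symm
    calc (g * f * h) (b n) = g (f (h (b n))) := rfl
      _ = g (w n) := by rw [h1]
      _ = (bw.constr k (fun n => b n)) (proj (w n)) := rfl
      _ = (bw.constr k (fun n => b n)) (bw n) := by rw [h2]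
      _ = b n := bw.constr_basis k _ n
      _ = (1 : Module.End k V) (b n) := rfl
  have : (1 : Module.End k V) ∈ J := by
    rw [← key]
    exact J.mul_mem_right _ _ (J.mul_mem_left _ _ hfJ)
  exact (TwoSidedIdeal.one_mem_iff J).1 this

/-- The identity does not have finite rank. -/
lemma aux_one (k V : Type*) [Field k] [AddCommGroup V] [Module k V] (b : Module.Basis ℕ k V)
    (h1 : FiniteDimensional k (LinearMap.range (1 : Module.End k V))) : False := by
  have hr : LinearMap.range (1 : Module.End k V) = ⊤ :=
    LinearMap.range_eq_top.2 fun v => ⟨v, rfl⟩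
  rw [hr] at h1
  haveI : FiniteDimensional k V := Module.Finite.equiv (Submodule.topEquiv)
  haveI : Fintype ℕ := FiniteDimensional.fintypeBasisIndex b
  exact (instInfiniteNat).not_finite (Finite.of_fintype ℕ)

/-- If `V` has a countably infinite basis, the finite-rank endomorphisms form a two-sided
ideal of `End_k(V)`, which is the unique maximal two-sided ideal. -/
theorem end_countable_basis_unique_max (k V : Type*) [Field k] [AddCommGroup V] [Module k V]
    (b : Module.Basis ℕ k V) :
    ∃ I : TwoSidedIdeal (Module.End k V),
      (∀ f : Module.End k V, f ∈ I ↔ FiniteDimensional k (LinearMap.range f)) ∧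
      IsCoatom I ∧ ∀ J : TwoSidedIdeal (Module.End k V), IsCoatom J → J = I := by
  set carrier : Set (Module.End k V) :=
    {f | FiniteDimensional k (LinearMap.range f)} with hcarrier
  have zero_mem : (0 : Module.End k V) ∈ carrier := by
    simp only [hcarrier, Set.mem_setOf_eq]
    have hle : LinearMap.range (0 : Module.End k V) ≤ ⊥ := by
      rintro v ⟨z, rfl⟩; simp
    exact Submodule.finiteDimensional_of_le hle
  have add_mem : ∀ {x y : Module.End k V}, x ∈ carrier → y ∈ carrier → x + y ∈ carrier := by
    intro x y hx hy
    simp only [hcarrier, Set.mem_setOf_eq] at *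
    have hle : LinearMap.range (x + y) ≤ LinearMap.range x ⊔ LinearMap.range y := by
      rintro v ⟨z, rfl⟩
      exact Submodule.mem_sup.2 ⟨x z, ⟨z, rfl⟩, y z, ⟨z, rfl⟩, rfl⟩
    haveI : FiniteDimensional k (LinearMap.range x ⊔ LinearMap.range y : Submodule k V) :=
      Submodule.finiteDimensional_sup _ _
    exact Submodule.finiteDimensional_of_le hle
  have neg_mem : ∀ {x : Module.End k V}, x ∈ carrier → -x ∈ carrier := by
    intro x hx
    simp only [hcarrier, Set.mem_setOf_eq] at *
    have hle : LinearMap.range (-x) ≤ LinearMap.range x := by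
      rintro v ⟨z, rfl⟩; exact ⟨-z, by simp⟩
    exact Submodule.finiteDimensional_of_le hle
  have mul_mem_left : ∀ {x y : Module.End k V}, y ∈ carrier → x * y ∈ carrier := by
    intro x y hy
    simp only [hcarrier, Set.mem_setOf_eq] at *
    rw [show x * y = x.comp y from rfl, LinearMap.range_comp]
    haveI := hy
    exact Module.Finite.map _ _
  have mul_mem_right : ∀ {x y : Module.End k V}, x ∈ carrier → x * y ∈ carrier := by
    intro x y hx
    simp only [hcarrier, Set.mem_setOf_eq] at *
    have hle : LinearMap.range (x * y) ≤ LinearMap.range x := by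
      rintro v ⟨z, rfl⟩; exact ⟨y z, rfl⟩
    exact Submodule.finiteDimensional_of_le hle
  refine ⟨TwoSidedIdeal.mk' carrier zero_mem add_mem neg_mem mul_mem_left mul_mem_right,
    fun f => TwoSidedIdeal.mem_mk' _ _ _ _ _ _ f, ?_, ?_⟩
  · set I := TwoSidedIdeal.mk' carrier zero_mem add_mem neg_mem mul_mem_left mul_mem_right
    have memI : ∀ f : Module.End k V, f ∈ I ↔ FiniteDimensional k (LinearMap.range f) :=
      fun f => TwoSidedIdeal.mem_mk' _ _ _ _ _ _ f
    have hne : I ≠ ⊤ := by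
      intro htop
      exact aux_one k V b ((memI 1).1 (htop ▸ TwoSidedIdeal.mem_top _))
    refine ⟨hne, fun J hJ => ?_⟩
    obtain ⟨f, hfJ, hfI⟩ := SetLike.exists_of_lt hJ
    rw [memI] at hfI
    exact aux_eq_top k V b J f hfJ hfI
  · intro J hJ
    set I := TwoSidedIdeal.mk' carrier zero_mem add_mem neg_mem mul_mem_left mul_mem_right
    have memI : ∀ f : Module.End k V, f ∈ I ↔ FiniteDimensional k (LinearMap.range f) :=
      fun f => TwoSidedIdeal.mem_mk' _ _ _ _ _ _ f
    have hle : J ≤ I := by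
      intro f hfJ
      rw [memI]
      by_contra hfin
      exact hJ.1 (aux_eq_top k V b J f hfJ hfin)
    rcases eq_or_lt_of_le hle with heq | hlt
    · exact heq
    · exfalso
      have : I = ⊤ := hJ.2 I hlt
      exact aux_one k V b ((memI 1).1 (this ▸ TwoSidedIdeal.mem_top _))
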